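/- Let {x_i} be a partition of X into k = |{x_i}| blocks each of size at most d×d, with distinct blocks r_j occurring with multiplicities n_j (so Σ_j n_j = k). Define H(X) = −Σ_j (n_j/k) log₂(n_j/k) and BDM(X) = Σ_j (CTM(r_j) + log₂ n_j), where CTM values are bounded by a constant depending only on d. Then |BDM(X) − H(X)| ≤ c_d · log₂ k for some constant c_d depending only on d. -/

import Mathlib

/-- Worst-case convergence of BDM to Shannon entropy: blocks range over a finite set
(the binary matrices of size at most `d × d`), so CTM values are bounded and there is a
constant `c_d` with `|BDM(X) − H(X)| ≤ c_d · log₂ k`, where `k` is the number of blocks in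
the partition, `BDM(X) = Σ_j (CTM(r_j) + log₂ n_j)` and
`H(X) = −Σ_j (n_j/k) log₂(n_j/k)`. -/
theorem stmt10 {Block : Type} [Fintype Block] [DecidableEq Block] (CTM : Block → ℝ) :
    ∃ c : ℝ, 0 ≤ c ∧ ∀ X : List Block, 2 ≤ X.length →
      |(∑ r ∈ X.toFinset, (CTM r + Real.logb 2 (X.count r)))
        - (-(∑ r ∈ X.toFinset, ((X.count r : ℝ) / X.length)
              * Real.logb 2 ((X.count r : ℝ) / X.length)))|
        ≤ c * Real.logb 2 (X.length) := by
  classical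
  set B : ℝ := ∑ r : Block, |CTM r| with hB
  have hB0 : 0 ≤ B := Finset.sum_nonneg fun r _ => abs_nonneg _
  refine ⟨B + 2 * Fintype.card Block, by positivity, ?_⟩
  intro X hX
  set k : ℝ := (X.length : ℝ) with hk
  have hk2 : (2:ℝ) ≤ k := by rw [hk]; exact_mod_cast hX
  have hk0 : (0:ℝ) < k := by linarith
  have hlog1 : 1 ≤ Real.logb 2 k := by
    rw [show (1:ℝ) = Real.logb 2 2 from (Real.logb_self_eq_one one_lt_two).symm]
    exact Real.logb_le_logb_of_le one_lt_two two_pos hk2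
  have hlogk0 : 0 ≤ Real.logb 2 k := by linarith
  -- per-element facts
  have hcount : ∀ r ∈ X.toFinset, 1 ≤ X.count r ∧ X.count r ≤ X.length := by
    intro r hr
    exact ⟨List.count_pos_iff.mpr (List.mem_toFinset.mp hr), List.count_le_length⟩
  have hcard : (X.toFinset.card : ℝ) ≤ (Fintype.card Block : ℝ) := by
    exact_mod_cast Finset.card_le_card (Finset.subset_univ _)
  -- bound the BDM sum
  have h1 : |∑ r ∈ X.toFinset, (CTM r + Real.logb 2 (X.count r))|
      ≤ B + X.toFinset.card * Real.logb 2 k := by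
    refine (Finset.abs_sum_le_sum_abs _ _).trans ?_
    have : ∑ r ∈ X.toFinset, |CTM r + Real.logb 2 (X.count r)|
        ≤ ∑ r ∈ X.toFinset, (|CTM r| + Real.logb 2 k) := by
      refine Finset.sum_le_sum fun r hr => ?_
      obtain ⟨h1r, h2r⟩ := hcount r hr
      have hn1 : (1:ℝ) ≤ (X.count r : ℝ) := by exact_mod_cast h1r
      have hnk : (X.count r : ℝ) ≤ k := by rw [hk]; exact_mod_cast h2r
      have hlognn : 0 ≤ Real.logb 2 (X.count r) := Real.logb_nonneg one_lt_two hn1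
      have hlogle : Real.logb 2 (X.count r) ≤ Real.logb 2 k :=
        Real.logb_le_logb_of_le one_lt_two (by linarith) hnk
      calc |CTM r + Real.logb 2 (X.count r)| ≤ |CTM r| + |Real.logb 2 (X.count r)| :=
            abs_add_le _ _
        _ ≤ |CTM r| + Real.logb 2 k := by rw [abs_of_nonneg hlognn]; linarith
    refine this.trans ?_
    rw [Finset.sum_add_distrib, Finset.sum_const, nsmul_eq_mul]
    have : ∑ r ∈ X.toFinset, |CTM r| ≤ B :=
      Finset.sum_le_sum_of_subset_of_nonneg (Finset.subset_univ _)
        (fun _ _ _ => abs_nonneg _)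
    linarith
  -- bound the entropy sum
  have h2 : |∑ r ∈ X.toFinset, ((X.count r : ℝ) / k) * Real.logb 2 ((X.count r : ℝ) / k)|
      ≤ X.toFinset.card * Real.logb 2 k := by
    refine (Finset.abs_sum_le_sum_abs _ _).trans ?_
    have : ∑ r ∈ X.toFinset, |((X.count r : ℝ) / k) * Real.logb 2 ((X.count r : ℝ) / k)|
        ≤ ∑ r ∈ X.toFinset, Real.logb 2 k := by
      refine Finset.sum_le_sum fun r hr => ?_
      obtain ⟨h1r, h2r⟩ := hcount r hr
      have hn1 : (1:ℝ) ≤ (X.count r : ℝ) := by exact_mod_cast h1r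
      have hnk : (X.count r : ℝ) ≤ k := by rw [hk]; exact_mod_cast h2r
      have hp0 : 0 < (X.count r : ℝ) / k := by positivity
      have hp1 : (X.count r : ℝ) / k ≤ 1 := by
        rw [div_le_one hk0]; exact hnk
      have hlogp : Real.logb 2 ((X.count r : ℝ) / k) ≤ 0 :=
        Real.logb_nonpos one_lt_two hp0.le hp1
      have hlogdiv : Real.logb 2 ((X.count r : ℝ) / k)
          = Real.logb 2 (X.count r) - Real.logb 2 k :=
        Real.logb_div (by positivity) (by positivity)
      have hlognn : 0 ≤ Real.logb 2 (X.count r) := Real.logb_nonneg one_lt_two hn1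
      rw [abs_mul, abs_of_nonneg hp0.le, abs_of_nonpos hlogp]
      calc (X.count r : ℝ) / k * -Real.logb 2 ((X.count r : ℝ) / k)
          ≤ 1 * -Real.logb 2 ((X.count r : ℝ) / k) := by
            apply mul_le_mul_of_nonneg_right hp1 (by linarith)
        _ ≤ Real.logb 2 k := by rw [one_mul, hlogdiv]; linarith
    refine this.trans ?_
    rw [Finset.sum_const, nsmul_eq_mul]
  calc |(∑ r ∈ X.toFinset, (CTM r + Real.logb 2 (X.count r)))
        - (-(∑ r ∈ X.toFinset, ((X.count r : ℝ) / k) * Real.logb 2 ((X.count r : ℝ) / k)))|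
      ≤ |∑ r ∈ X.toFinset, (CTM r + Real.logb 2 (X.count r))|
        + |∑ r ∈ X.toFinset, ((X.count r : ℝ) / k) * Real.logb 2 ((X.count r : ℝ) / k)| := by
        rw [sub_neg_eq_add]; exact abs_add_le _ _
    _ ≤ B + 2 * X.toFinset.card * Real.logb 2 k := by linarith
    _ ≤ (B + 2 * Fintype.card Block) * Real.logb 2 k := by
        have h3 : B ≤ B * Real.logb 2 k := le_mul_of_one_le_right hB0 hlog1
        have h4 : 2 * (X.toFinset.card : ℝ) * Real.logb 2 k
            ≤ 2 * (Fintype.card Block : ℝ) * Real.logb 2 k := by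
          apply mul_le_mul_of_nonneg_right _ hlogk0
          linarith
        ring_nf
        ring_nf at h3 h4
        linarith
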